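/- Let n=1 and s∈(0,1) with 2s<1, let K satisfy (K1) and (K2), let α ∈ (2s,1], and let u ∈ C^{1,α}(ℝ). Then for every x∈ℝ, the derivative of L_K u at x exists and equals L_K u′(x); that is, (L_K u)′(x) = L_K u′(x). -/

import Mathlib

open MeasureTheory Filter Set Topology
open Real

/-- The principal value operator `L_K u (x)` (junk value if the limit does not exist). -/
noncomputable def LK (K u : ℝ → ℝ) (x : ℝ) : ℝ :=
  limUnder (nhdsWithin (0:ℝ) (Set.Ioi 0))
    (fun ε : ℝ => ∫ y in {y : ℝ | ε < |y - x|}, (u y - u x) * K (x - y))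


-- key integrability lemma
lemma integrable_min_rpow (C D L β p : ℝ) (hC : 0 ≤ C) (hD : 0 ≤ D) (hL : 0 ≤ L)
    (hβp : -1 < β - p) (hp : 1 < p) :
    Integrable (fun z : ℝ => min (C * |z| ^ β) D * (L * |z| ^ (-p))) := by
  set g : ℝ → ℝ := fun z => min (C * |z| ^ β) D * (L * |z| ^ (-p)) with hg
  have hmeas : Measurable g := by
    apply Measurable.mul
    · exact (measurable_const.mul (measurable_abs.pow_const β)).min measurable_const
    · exact measurable_const.mul (measurable_abs.pow_const (-p))
  have hnonneg : ∀ z, 0 ≤ g z := fun z =>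
    mul_nonneg (le_min (mul_nonneg hC (rpow_nonneg (abs_nonneg _) _)) hD)
      (mul_nonneg hL (rpow_nonneg (abs_nonneg _) _))
  have hIoo : IntegrableOn g (Ioo (0:ℝ) 1) := by
    have hint : IntegrableOn (fun z : ℝ => C * L * z ^ (β - p)) (Ioo (0:ℝ) 1) :=
      (((intervalIntegral.integrableOn_Ioo_rpow_iff one_pos).mpr hβp).const_mul (C * L))
    refine hint.mono' (hmeas.aestronglyMeasurable.restrict) ?_
    filter_upwards [ae_restrict_mem measurableSet_Ioo] with z hz
    have hz0 : 0 < z := hz.1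
    have habs : |z| = z := abs_of_pos hz0
    rw [Real.norm_eq_abs, abs_of_nonneg (hnonneg z), hg]
    simp only [habs]
    calc min (C * z ^ β) D * (L * z ^ (-p)) ≤ (C * z ^ β) * (L * z ^ (-p)) := by
          apply mul_le_mul_of_nonneg_right (min_le_left _ _)
            (mul_nonneg hL (rpow_nonneg hz0.le _))
      _ = C * L * z ^ (β - p) := by
          rw [show β - p = β + (-p) by ring, rpow_add hz0]; ring
  have hIci : IntegrableOn g (Ici (1:ℝ)) := by
    rw [integrableOn_Ici_iff_integrableOn_Ioi]
    have hint : IntegrableOn (fun z : ℝ => D * L * z ^ (-p)) (Ioi (1:ℝ)) :=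
      ((integrableOn_Ioi_rpow_of_lt (by linarith) one_pos).const_mul (D * L))
    refine hint.mono' (hmeas.aestronglyMeasurable.restrict) ?_
    filter_upwards [ae_restrict_mem measurableSet_Ioi] with z hz
    have hz0 : (0:ℝ) < z := lt_trans one_pos hz
    have habs : |z| = z := abs_of_pos hz0
    rw [Real.norm_eq_abs, abs_of_nonneg (hnonneg z), hg]
    simp only [habs]
    calc min (C * z ^ β) D * (L * z ^ (-p)) ≤ D * (L * z ^ (-p)) :=
          mul_le_mul_of_nonneg_right (min_le_right _ _)
            (mul_nonneg hL (rpow_nonneg hz0.le _))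
      _ = D * L * z ^ (-p) := by ring
  have hIoi : IntegrableOn g (Ioi (0:ℝ)) := by
    rw [← Ioo_union_Ici_eq_Ioi one_pos]
    exact hIoo.union hIci
  have heven : ∀ z, g (-z) = g z := by intro z; simp [hg, abs_neg]
  have hIio : IntegrableOn g (Iio (0:ℝ)) := by
    have := (MeasurePreserving.integrableOn_comp_preimage
      (Measure.measurePreserving_neg (volume : Measure ℝ))
      (MeasurableEquiv.neg ℝ).measurableEmbedding (f := g) (s := Ioi (0:ℝ))).mpr hIoi
    have hpre : (Neg.neg ⁻¹' Ioi (0:ℝ) : Set ℝ) = Iio 0 := by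
      ext z; simp
    rw [hpre] at this
    refine this.congr_fun (fun z _ => ?_) measurableSet_Iio
    simpa using (heven z)
  have : IntegrableOn g (Iio (0:ℝ) ∪ Ici 0) := by
    refine hIio.union ?_
    rw [integrableOn_Ici_iff_integrableOn_Ioi]
    exact hIoi
  rwa [Iio_union_Ici, integrableOn_univ] at this


lemma LK_tendsto (K v : ℝ → ℝ) (x : ℝ)
    (hint : Integrable (fun y => (v y - v x) * K (x - y))) :
    Tendsto (fun ε : ℝ => ∫ y in {y : ℝ | ε < |y - x|}, (v y - v x) * K (x - y))
      (nhdsWithin (0:ℝ) (Set.Ioi 0)) (nhds (∫ y, (v y - v x) * K (x - y))) := by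
  set f : ℝ → ℝ := fun y => (v y - v x) * K (x - y) with hf
  have hms : ∀ ε : ℝ, MeasurableSet {y : ℝ | ε < |y - x|} := fun ε =>
    measurableSet_lt measurable_const ((measurable_id.sub measurable_const).abs)
  have heq : ∀ ε : ℝ, (∫ y in {y : ℝ | ε < |y - x|}, f y)
      = ∫ y, ({y : ℝ | ε < |y - x|}).indicator f y := fun ε =>
    (integral_indicator (hms ε)).symm
  simp only [heq]
  apply tendsto_integral_filter_of_dominated_convergence (fun y => ‖f y‖)
  · exact Eventually.of_forall fun ε =>
      hint.aestronglyMeasurable.indicator (hms ε)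
  · exact Eventually.of_forall fun ε => Eventually.of_forall fun y =>
      norm_indicator_le_norm_self f y
  · exact hint.norm
  · have hx : ∀ᵐ y : ℝ, y ≠ x := by
      rw [ae_iff]
      simp only [ne_eq, not_not]
      rw [show {a : ℝ | a = x} = {x} from by ext y; simp]
      exact measure_singleton x
    filter_upwards [hx] with y hy
    have hpos : 0 < |y - x| := abs_pos.mpr (sub_ne_zero.mpr hy)
    have hev : ∀ᶠ ε in nhdsWithin (0:ℝ) (Set.Ioi 0),
        ({y : ℝ | ε < |y - x|}).indicator f y = f y := by
      filter_upwards [Ioo_mem_nhdsGT_of_mem (Set.mem_Ico.mpr ⟨le_refl 0, hpos⟩)] with ε hε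
      exact indicator_of_mem (by exact hε.2) f
    exact Tendsto.congr' (Filter.EventuallyEq.symm hev) tendsto_const_nhds


lemma integrable_kernel_mul (K v : ℝ → ℝ) (hv : AEStronglyMeasurable v (volume : Measure ℝ))
    (hKm : Measurable K) (x C D L β p : ℝ) (hC : 0 ≤ C) (hD : 0 ≤ D) (hL : 0 ≤ L)
    (hβp : -1 < β - p) (hp : 1 < p)
    (hK : ∀ᵐ z : ℝ, 0 ≤ K z ∧ K z ≤ L * |z| ^ (-p))
    (hvb : ∀ y z : ℝ, |v y - v z| ≤ min (C * |y - z| ^ β) D)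
    (hint : Integrable (fun z : ℝ => min (C * |z| ^ β) D * (L * |z| ^ (-p)))) :
    Integrable (fun z : ℝ => (v (x + z) - v x) * K z) := by
  refine hint.mono' ?_ ?_
  · have h1 : AEStronglyMeasurable (fun z : ℝ => v (x + z)) volume :=
      hv.comp_quasiMeasurePreserving
        (measurePreserving_add_left volume x).quasiMeasurePreserving
    exact (h1.sub aestronglyMeasurable_const).mul hKm.aestronglyMeasurable
  · filter_upwards [hK] with z hz
    rw [Real.norm_eq_abs, abs_mul]
    have h2 : |v (x + z) - v x| ≤ min (C * |z| ^ β) D := by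
      have := hvb (x + z) x
      simpa using this
    have h3 : |K z| ≤ L * |z| ^ (-p) := by
      rw [abs_of_nonneg hz.1]; exact hz.2
    exact mul_le_mul h2 h3 (abs_nonneg _)
      (le_min (mul_nonneg hC (rpow_nonneg (abs_nonneg _) _)) hD)

theorem deriv_commutes_with_LK_low_order (s lam Lam α : ℝ)
    (hs : s ∈ Set.Ioo (0:ℝ) 1) (hs2 : 2*s < 1)
    (hα : α ∈ Set.Ioc (2*s) 1) (hlam : 0 < lam) (hlL : lam ≤ Lam)
    (K : ℝ → ℝ) (hKmeas : Measurable K)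
    (hK1 : ∀ᵐ x : ℝ, K (-x) = K x)
    (hK2 : ∀ᵐ x : ℝ, lam / |x| ^ (1 + 2*s) ≤ K x ∧ K x ≤ Lam / |x| ^ (1 + 2*s))
    -- u ∈ C^{1,α}(ℝ)
    (u : ℝ → ℝ) (hdiff : Differentiable ℝ u)
    (hubdd : ∃ M : ℝ, ∀ x, |u x| ≤ M)
    (hu'bdd : ∃ M : ℝ, ∀ x, |deriv u x| ≤ M)
    (hu'hold : ∃ M : ℝ, ∀ x y : ℝ, |deriv u x - deriv u y| ≤ M * |x - y| ^ α) :
    ∀ x : ℝ, HasDerivAt (LK K u) (LK K (deriv u) x) x := by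
  obtain ⟨M₁, hM₁⟩ := hubdd
  obtain ⟨M₂, hM₂⟩ := hu'bdd
  obtain ⟨M₃, hM₃⟩ := hu'hold
  set p : ℝ := 1 + 2*s with hpdef
  have hp : 1 < p := by simp only [hpdef]; linarith [hs.1]
  have hp2 : p < 2 := by simp only [hpdef]; linarith
  have hLam : 0 ≤ Lam := le_trans hlam.le hlL
  -- kernel bound
  have hne : ∀ᵐ z : ℝ, z ≠ 0 := by
    rw [ae_iff]
    simp only [ne_eq, not_not]
    rw [show {a : ℝ | a = 0} = {(0:ℝ)} from by ext y; simp]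
    exact measure_singleton 0
  have hK : ∀ᵐ z : ℝ, 0 ≤ K z ∧ K z ≤ Lam * |z| ^ (-p) := by
    filter_upwards [hK2, hne] with z hz hz0
    have habs : 0 < |z| := abs_pos.mpr hz0
    have hzp : 0 < |z| ^ p := rpow_pos_of_pos habs p
    constructor
    · exact le_trans (div_pos hlam hzp).le hz.1
    · have : Lam / |z| ^ p = Lam * |z| ^ (-p) := by
        rw [rpow_neg (abs_nonneg z), div_eq_mul_inv]
      rw [← this]; exact hz.2
  -- bounds on u and deriv u
  set C₁ : ℝ := max M₂ 0 with hC₁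
  set D₁ : ℝ := 2 * max M₁ 0 with hD₁
  set C₂ : ℝ := max M₃ 0 with hC₂
  set D₂ : ℝ := 2 * max M₂ 0 with hD₂
  have hC₁0 : 0 ≤ C₁ := le_max_right _ _
  have hD₁0 : 0 ≤ D₁ := by positivity
  have hC₂0 : 0 ≤ C₂ := le_max_right _ _
  have hD₂0 : 0 ≤ D₂ := by positivity
  have hlip : LipschitzWith ⟨C₁, hC₁0⟩ u := by
    apply lipschitzWith_of_nnnorm_deriv_le hdiff
    intro x
    change ‖deriv u x‖ ≤ C₁; rw [Real.norm_eq_abs]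
    exact le_trans (hM₂ x) (le_max_left _ _)
  have hub : ∀ y z : ℝ, |u y - u z| ≤ min (C₁ * |y - z| ^ (1:ℝ)) D₁ := by
    intro y z
    refine le_min ?_ ?_
    · rw [rpow_one]
      have := hlip.dist_le_mul y z
      rw [Real.dist_eq, Real.dist_eq] at this; exact this
    · calc |u y - u z| ≤ |u y| + |u z| := abs_sub _ _
        _ ≤ max M₁ 0 + max M₁ 0 :=
          add_le_add (le_trans (hM₁ y) (le_max_left _ _)) (le_trans (hM₁ z) (le_max_left _ _))
        _ = D₁ := by rw [hD₁]; ring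
  have hu'b : ∀ y z : ℝ, |deriv u y - deriv u z| ≤ min (C₂ * |y - z| ^ α) D₂ := by
    intro y z
    refine le_min ?_ ?_
    · exact le_trans (hM₃ y z)
        (mul_le_mul_of_nonneg_right (le_max_left _ _) (rpow_nonneg (abs_nonneg _) _))
    · calc |deriv u y - deriv u z| ≤ |deriv u y| + |deriv u z| := abs_sub _ _
        _ ≤ max M₂ 0 + max M₂ 0 :=
          add_le_add (le_trans (hM₂ y) (le_max_left _ _)) (le_trans (hM₂ z) (le_max_left _ _))
        _ = D₂ := by rw [hD₂]; ring
  -- measurability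
  have humeas : AEStronglyMeasurable u (volume : Measure ℝ) :=
    hdiff.continuous.aestronglyMeasurable
  have hu'meas : AEStronglyMeasurable (deriv u) (volume : Measure ℝ) :=
    (measurable_deriv u).aestronglyMeasurable
  -- integrability of dominating functions
  have hdom₁ : Integrable (fun z : ℝ => min (C₁ * |z| ^ (1:ℝ)) D₁ * (Lam * |z| ^ (-p))) :=
    integrable_min_rpow C₁ D₁ Lam 1 p hC₁0 hD₁0 hLam (by linarith) hp
  have hdom₂ : Integrable (fun z : ℝ => min (C₂ * |z| ^ α) D₂ * (Lam * |z| ^ (-p))) :=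
    integrable_min_rpow C₂ D₂ Lam α p hC₂0 hD₂0 hLam (by simp only [hpdef]; linarith [hα.1]) hp
  -- integrability of the two integrands in z-form
  have hintu : ∀ x' : ℝ, Integrable (fun z : ℝ => (u (x' + z) - u x') * K z) := fun x' =>
    integrable_kernel_mul K u humeas hKmeas x' C₁ D₁ Lam 1 p hC₁0 hD₁0 hLam
      (by linarith) hp hK hub hdom₁
  have hintu' : ∀ x' : ℝ, Integrable (fun z : ℝ => (deriv u (x' + z) - deriv u x') * K z) :=
    fun x' => integrable_kernel_mul K (deriv u) hu'meas hKmeas x' C₂ D₂ Lam α p hC₂0 hD₂0 hLam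
      (by simp only [hpdef]; linarith [hα.1]) hp hK hu'b hdom₂
  -- LK equals the z-form integral
  have hLKeq : ∀ (v : ℝ → ℝ),
      (∀ x' : ℝ, Integrable (fun z : ℝ => (v (x' + z) - v x') * K z)) →
      ∀ x' : ℝ, LK K v x' = ∫ z : ℝ, (v (x' + z) - v x') * K z := by
    intro v hvint x'
    have heqz : (fun z : ℝ => (v (x' + z) - v x') * K (x' - (x' + z)))
        =ᵐ[volume] (fun z : ℝ => (v (x' + z) - v x') * K z) := by
      filter_upwards [hK1] with z hz
      rw [show x' - (x' + z) = -z by ring, hz]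
    have hzf : Integrable (fun z : ℝ => (v (x' + z) - v x') * K (x' - (x' + z))) :=
      (hvint x').congr heqz.symm
    have hyf : Integrable (fun y : ℝ => (v y - v x') * K (x' - y)) := by
      have := hzf.comp_add_left (-x')
      simpa using this
    have htend := LK_tendsto K v x' hyf
    have h1 : LK K v x' = ∫ y : ℝ, (v y - v x') * K (x' - y) := htend.limUnder_eq
    rw [h1]
    rw [← integral_add_left_eq_self (fun y : ℝ => (v y - v x') * K (x' - y)) x']
    exact integral_congr_ae heqz
  -- main derivative computation
  intro x
  have key := hasDerivAt_integral_of_dominated_loc_of_deriv_le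
    (F := fun (x' : ℝ) (z : ℝ) => (u (x' + z) - u x') * K z)
    (F' := fun (x' : ℝ) (z : ℝ) => (deriv u (x' + z) - deriv u x') * K z)
    (x₀ := x) (s := Metric.ball x 1) (μ := volume)
    (bound := fun z : ℝ => min (C₂ * |z| ^ α) D₂ * (Lam * |z| ^ (-p)))
    (Metric.ball_mem_nhds x one_pos)
    (Eventually.of_forall fun x' =>
      (((hdiff.continuous.comp (continuous_const.add continuous_id)).sub
        continuous_const).aestronglyMeasurable).mul hKmeas.aestronglyMeasurable)
    (hintu x)
    ((hintu' x).aestronglyMeasurable)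
    ?_ hdom₂ ?_
  · have e1 : LK K u = fun x' : ℝ => ∫ z : ℝ, (u (x' + z) - u x') * K z :=
      funext (hLKeq u hintu)
    have e2 : LK K (deriv u) x = ∫ z : ℝ, (deriv u (x + z) - deriv u x) * K z :=
      hLKeq (deriv u) hintu' x
    rw [e1, e2]
    exact key.2
  · -- bound
    filter_upwards [hK] with z hz
    intro x' _
    rw [Real.norm_eq_abs, abs_mul]
    have h2 : |deriv u (x' + z) - deriv u x'| ≤ min (C₂ * |z| ^ α) D₂ := by
      have := hu'b (x' + z) x'
      simpa using this
    have h3 : |K z| ≤ Lam * |z| ^ (-p) := by rw [abs_of_nonneg hz.1]; exact hz.2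
    exact mul_le_mul h2 h3 (abs_nonneg _)
      (le_min (mul_nonneg hC₂0 (rpow_nonneg (abs_nonneg _) _)) hD₂0)
  · -- differentiability
    refine Eventually.of_forall fun z => fun x' _ => ?_
    have d1 : HasDerivAt (fun w : ℝ => u (w + z)) (deriv u (x' + z)) x' := by
      have := ((hdiff (x' + z)).hasDerivAt).comp x' ((hasDerivAt_id x').add_const z)
      simpa [Function.comp_def] using this
    exact (d1.sub (hdiff x').hasDerivAt).mul_const (K z)
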